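/- arXiv:2303.01031 — 2 statements merged into one kernel-verified Lean document; each statement's English description precedes it below -/
import Mathlib

section
/- Let A be a p×p real symmetric positive definite matrix and E a p×p real symmetric matrix with max-entry norm ||E||_max ≤ ε, where λ_min(A) ≥ 2pε and ε > 0. Then A + E is invertible and ||(A+E)^{-1} - A^{-1}||_max ≤ (2p / λ_min(A)^2) · ε. -/
open Matrix

lemma quad_lower {p : ℕ} (A : Matrix (Fin p) (Fin p) ℝ) (hAher : A.IsHermitian) (lam : ℝ)
    (hl : ∀ i, lam ≤ hAher.eigenvalues i) (x : Fin p → ℝ) :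
    lam * (x ⬝ᵥ x) ≤ x ⬝ᵥ A *ᵥ x := by
  set U : Matrix (Fin p) (Fin p) ℝ := (hAher.eigenvectorUnitary : Matrix (Fin p) (Fin p) ℝ) with hU
  have hUU : U * star U = 1 := mem_unitaryGroup_iff.mp hAher.eigenvectorUnitary.2
  have hstar : star U = Uᵀ := by ext i j; simp [Matrix.star_apply]
  rw [hstar] at hUU
  set z : Fin p → ℝ := Uᵀ *ᵥ x with hz
  have hdiag : diagonal (RCLike.ofReal ∘ hAher.eigenvalues) = diagonal hAher.eigenvalues := by
    ext i j; simp [diagonal_apply]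
  have h1 : x ⬝ᵥ A *ᵥ x = z ⬝ᵥ (diagonal hAher.eigenvalues) *ᵥ z := by
    conv_lhs => rw [hAher.spectral_theorem, Unitary.conjStarAlgAut_apply, hdiag, hstar]
    rw [← mulVec_mulVec, ← mulVec_mulVec, dotProduct_mulVec x U, hz, mulVec_transpose]
  have h2 : z ⬝ᵥ z = x ⬝ᵥ x := by
    rw [hz, dotProduct_mulVec, vecMul_transpose, mulVec_mulVec, hUU, one_mulVec]
  rw [h1, ← h2]
  simp only [dotProduct, mulVec_diagonal, Finset.mul_sum]
  refine Finset.sum_le_sum fun i _ => ?_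
  have := hl i
  nlinarith [sq_nonneg (z i)]

/-- matrix inverse perturbation, Lemma 7 of the paper.
If `A` is symmetric positive definite with smallest eigenvalue `lam ≥ 2pε`, and `E` is symmetric
with `‖E‖_max ≤ ε` (`ε > 0`), then `A + E` is invertible and
`‖(A+E)⁻¹ - A⁻¹‖_max ≤ (2p / lam²) ε`. -/
theorem stmt3 {p : ℕ} (A E : Matrix (Fin p) (Fin p) ℝ) (ε lam : ℝ)
    (hA : A.PosDef) (hAher : A.IsHermitian)
    (hlam : IsLeast (Set.range hAher.eigenvalues) lam)
    (hE : Eᵀ = E) (hEmax : ∀ i j, |E i j| ≤ ε)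
    (hε : 0 < ε) (hgap : 2 * p * ε ≤ lam) :
    IsUnit (A + E) ∧
      ∀ i j, |(A + E)⁻¹ i j - A⁻¹ i j| ≤ 2 * p / lam ^ 2 * ε := by
  -- lam > 0
  obtain ⟨i₀, hi₀⟩ := hlam.1
  have hlampos : 0 < lam := hi₀ ▸ hA.eigenvalues_pos i₀
  have hl : ∀ i, lam ≤ hAher.eigenvalues i := fun i => hlam.2 ⟨i, rfl⟩
  have hquadA : ∀ x : Fin p → ℝ, lam * (x ⬝ᵥ x) ≤ x ⬝ᵥ A *ᵥ x := quad_lower A hAher lam hl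
  -- bilinear bound for E
  have hEbil : ∀ x y : Fin p → ℝ,
      |x ⬝ᵥ E *ᵥ y| ≤ ε * (∑ k, |x k|) * (∑ l, |y l|) := by
    intro x y
    calc |x ⬝ᵥ E *ᵥ y| ≤ ∑ k, |x k * (E *ᵥ y) k| := Finset.abs_sum_le_sum_abs _ _
      _ ≤ ∑ k, |x k| * (ε * ∑ l, |y l|) := by
          refine Finset.sum_le_sum fun k _ => ?_
          rw [abs_mul]
          refine mul_le_mul_of_nonneg_left ?_ (abs_nonneg _)
          calc |(E *ᵥ y) k| = |∑ l, E k l * y l| := by simp [mulVec, dotProduct]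
            _ ≤ ∑ l, |E k l * y l| := Finset.abs_sum_le_sum_abs _ _
            _ ≤ ∑ l, ε * |y l| := by
                refine Finset.sum_le_sum fun l _ => ?_
                rw [abs_mul]
                exact mul_le_mul_of_nonneg_right (hEmax k l) (abs_nonneg _)
            _ = ε * ∑ l, |y l| := by rw [Finset.mul_sum]
      _ = ε * (∑ k, |x k|) * (∑ l, |y l|) := by rw [← Finset.sum_mul]; ring
  -- ℓ¹-ℓ² bound
  have hl1 : ∀ x : Fin p → ℝ, (∑ k, |x k|) ^ 2 ≤ p * (x ⬝ᵥ x) := by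
    intro x
    have h := Finset.sum_mul_sq_le_sq_mul_sq Finset.univ (fun _ => (1:ℝ)) (fun k => |x k|)
    simp only [one_mul, one_pow, sq_abs, Finset.sum_const, Finset.card_univ,
      Fintype.card_fin, nsmul_eq_mul] at h
    have hxx : x ⬝ᵥ x = ∑ k, x k ^ 2 := by simp [dotProduct, pow_two]
    rw [hxx]; linarith
  have hdotnn : ∀ x : Fin p → ℝ, 0 ≤ x ⬝ᵥ x := fun x =>
    Finset.sum_nonneg fun k _ => mul_self_nonneg _
  -- quadratic form lower bound for A + E
  have hquadB : ∀ x : Fin p → ℝ, lam / 2 * (x ⬝ᵥ x) ≤ x ⬝ᵥ (A + E) *ᵥ x := by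
    intro x
    have h1 := hquadA x
    have h2 := (abs_le.mp (hEbil x x)).1
    have h3 := hl1 x
    have h4 : (∑ k, |x k|) * (∑ l, |x l|) ≤ p * (x ⬝ᵥ x) := by
      rw [← pow_two] at *; exact h3
    have h5 : -(ε * (p * (x ⬝ᵥ x))) ≤ x ⬝ᵥ E *ᵥ x := by
      refine le_trans ?_ h2
      simp only [neg_le_neg_iff]
      calc ε * (∑ k, |x k|) * (∑ l, |x l|) = ε * ((∑ k, |x k|) * (∑ l, |x l|)) := by ring
        _ ≤ ε * (p * (x ⬝ᵥ x)) := mul_le_mul_of_nonneg_left h4 hε.le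
    have hpe : (p : ℝ) * ε ≤ lam / 2 := by linarith
    have hsum : x ⬝ᵥ (A + E) *ᵥ x = x ⬝ᵥ A *ᵥ x + x ⬝ᵥ E *ᵥ x := by
      rw [add_mulVec, dotProduct_add]
    rw [hsum]
    nlinarith [hdotnn x, mul_le_mul_of_nonneg_right hpe (hdotnn x)]
  -- A + E is positive definite
  have hEher : E.IsHermitian := by
    ext i j
    simpa using congrFun (congrFun hE i) j
  have hBher : (A + E).IsHermitian := hAher.add hEher
  have hBpd : (A + E).PosDef := by
    refine Matrix.PosDef.of_dotProduct_mulVec_pos hBher fun x hx => ?_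
    have hxx : 0 < x ⬝ᵥ x := by
      rcases (Function.ne_iff).mp hx with ⟨k, hk⟩
      exact Finset.sum_pos' (fun l _ => mul_self_nonneg _)
        ⟨k, Finset.mem_univ k, mul_self_pos.mpr hk⟩
    have : 0 < lam / 2 * (x ⬝ᵥ x) := by positivity
    simpa [star] using lt_of_lt_of_le this (hquadB x)
  have hBunit : IsUnit (A + E) := hBpd.isUnit
  have hdetB : IsUnit (A + E).det := (isUnit_iff_isUnit_det _).mp hBunit
  have hdetA : IsUnit A.det := (isUnit_iff_isUnit_det _).mp hA.isUnit
  have hBsym : (A + E)ᵀ = A + E := by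
    ext i j
    simpa using congrFun (congrFun hBher i) j
  have hBinvsym : (A + E)⁻¹ᵀ = (A + E)⁻¹ := by
    rw [transpose_nonsing_inv, hBsym]
  refine ⟨hBunit, fun i j => ?_⟩
  set x : Fin p → ℝ := fun k => (A + E)⁻¹ i k with hxdef
  set y : Fin p → ℝ := fun l => A⁻¹ l j with hydef
  have hxcol : x = fun k => (A + E)⁻¹ k i := by
    funext k
    have h := congrFun (congrFun hBinvsym k) i
    rw [transpose_apply] at h
    exact h
  have hBx : (A + E) *ᵥ x = Pi.single i 1 := by
    funext k
    rw [hxcol]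
    have : ((A + E) *ᵥ fun k => (A + E)⁻¹ k i) k = ((A + E) * (A + E)⁻¹) k i := by
      simp [mulVec, dotProduct, mul_apply]
    rw [this, mul_nonsing_inv _ hdetB]
    rcases eq_or_ne k i with hk | hk
    · subst hk; simp [one_apply]
    · simp [one_apply, hk, Pi.single_eq_of_ne hk]
  have hAy : A *ᵥ y = Pi.single j 1 := by
    funext k
    have : (A *ᵥ fun l => A⁻¹ l j) k = (A * A⁻¹) k j := by
      simp [mulVec, dotProduct, mul_apply]
    rw [hydef, this, mul_nonsing_inv _ hdetA]
    rcases eq_or_ne k j with hk | hk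
    · subst hk; simp [one_apply]
    · simp [one_apply, hk, Pi.single_eq_of_ne hk]
  -- norm bounds
  have hxi : x ⬝ᵥ (A + E) *ᵥ x = x i := by
    rw [hBx, dotProduct_single, mul_one]
  have hyj : y ⬝ᵥ A *ᵥ y = y j := by
    rw [hAy, dotProduct_single, mul_one]
  have hxi2 : x i * x i ≤ x ⬝ᵥ x :=
    Finset.single_le_sum (f := fun k => x k * x k) (fun k _ => mul_self_nonneg _)
      (Finset.mem_univ i)
  have hyj2 : y j * y j ≤ y ⬝ᵥ y :=
    Finset.single_le_sum (f := fun l => y l * y l) (fun l _ => mul_self_nonneg _)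
      (Finset.mem_univ j)
  have hsx : x ⬝ᵥ x ≤ 4 / lam ^ 2 := by
    have h1 : lam / 2 * (x ⬝ᵥ x) ≤ x i := hxi ▸ hquadB x
    have h0 : 0 ≤ lam / 2 * (x ⬝ᵥ x) := mul_nonneg (by positivity) (hdotnn x)
    have key := le_trans (mul_self_le_mul_self h0 h1) hxi2
    rw [le_div_iff₀ (by positivity : (0:ℝ) < lam ^ 2)]
    rcases eq_or_lt_of_le (hdotnn x) with hs | hs
    · rw [← hs]; norm_num
    · nlinarith [key, hs]
  have hsy : y ⬝ᵥ y ≤ 1 / lam ^ 2 := by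
    have h1 : lam * (y ⬝ᵥ y) ≤ y j := hyj ▸ hquadA y
    have h0 : 0 ≤ lam * (y ⬝ᵥ y) := mul_nonneg hlampos.le (hdotnn y)
    have key := le_trans (mul_self_le_mul_self h0 h1) hyj2
    rw [le_div_iff₀ (by positivity : (0:ℝ) < lam ^ 2)]
    rcases eq_or_lt_of_le (hdotnn y) with hs | hs
    · rw [← hs]; norm_num
    · nlinarith [key, hs]
  -- the matrix identity
  have hid : (A + E)⁻¹ - A⁻¹ = -((A + E)⁻¹ * E * A⁻¹) := by
    have hEeq : E = (A + E) - A := (add_sub_cancel_left A E).symm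
    calc (A + E)⁻¹ - A⁻¹
        = (A + E)⁻¹ * (A * A⁻¹) - ((A + E)⁻¹ * (A + E)) * A⁻¹ := by
          rw [mul_nonsing_inv _ hdetA, nonsing_inv_mul _ hdetB, mul_one, one_mul]
      _ = -((A + E)⁻¹ * ((A + E) - A) * A⁻¹) := by noncomm_ring
      _ = -((A + E)⁻¹ * E * A⁻¹) := by rw [← hEeq]
  have hentry : (A + E)⁻¹ i j - A⁻¹ i j = -(x ⬝ᵥ E *ᵥ y) := by
    have h1 : ((A + E)⁻¹ - A⁻¹) i j = (-((A + E)⁻¹ * E * A⁻¹)) i j := by rw [hid]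
    have h2 : ((A + E)⁻¹ * E * A⁻¹) i j = x ⬝ᵥ E *ᵥ y := by
      simp only [mul_apply, mulVec, dotProduct, hxdef, hydef, Finset.sum_mul, Finset.mul_sum]
      rw [Finset.sum_comm]
      refine Finset.sum_congr rfl fun k _ => Finset.sum_congr rfl fun l _ => by ring
    simpa [h2] using h1
  rw [hentry, abs_neg]
  -- combine
  set Sx := ∑ k, |x k| with hSx
  set Sy := ∑ l, |y l| with hSy
  have hSxnn : 0 ≤ Sx := Finset.sum_nonneg fun k _ => abs_nonneg _
  have hSynn : 0 ≤ Sy := Finset.sum_nonneg fun l _ => abs_nonneg _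
  have hSx2 : Sx ^ 2 ≤ p * (4 / lam ^ 2) :=
    le_trans (hl1 x) (mul_le_mul_of_nonneg_left hsx (Nat.cast_nonneg p))
  have hSy2 : Sy ^ 2 ≤ p * (1 / lam ^ 2) :=
    le_trans (hl1 y) (mul_le_mul_of_nonneg_left hsy (Nat.cast_nonneg p))
  have hC : (0:ℝ) ≤ 2 * p / lam ^ 2 := by positivity
  have hprod : Sx * Sy ≤ 2 * p / lam ^ 2 := by
    have h1 : (Sx * Sy) ^ 2 ≤ (2 * p / lam ^ 2) ^ 2 := by
      have := mul_le_mul hSx2 hSy2 (sq_nonneg Sy) (by positivity)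
      calc (Sx * Sy) ^ 2 = Sx ^ 2 * Sy ^ 2 := by ring
        _ ≤ (p * (4 / lam ^ 2)) * (p * (1 / lam ^ 2)) := this
        _ = (2 * p / lam ^ 2) ^ 2 := by field_simp; ring
    have h2 := Real.sqrt_le_sqrt h1
    rwa [Real.sqrt_sq (mul_nonneg hSxnn hSynn), Real.sqrt_sq hC] at h2
  calc |x ⬝ᵥ E *ᵥ y| ≤ ε * Sx * Sy := hEbil x y
    _ = (Sx * Sy) * ε := by ring
    _ ≤ (2 * p / lam ^ 2) * ε := mul_le_mul_of_nonneg_right hprod hε.le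
end

section
/- Let S be a p×p symmetric matrix and μ > 0, M a p×p symmetric matrix, and set R = μM - S. If Θ = (R + sqrt(R^2 + 4μ I_p)) / (2μ), where sqrt denotes the symmetric positive definite square root of the positive definite matrix R^2 + 4μ I_p, then Θ is symmetric positive definite and satisfies Θ^{-1} = S + μΘ - μM, i.e., Θ is a stationary point of Θ ↦ -log det Θ + tr(ΘS) + (μ/2)||Θ - M||_F^2. -/
open Matrix

lemma aux_commute {p : ℕ} {Q R : Matrix (Fin p) (Fin p) ℝ} (hQ : Q.PosDef)
    (h : R * (Q * Q) = (Q * Q) * R) : R * Q = Q * R := by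
  classical
  have hH := hQ.1
  set V : Matrix (Fin p) (Fin p) ℝ := (hH.eigenvectorUnitary : Matrix (Fin p) (Fin p) ℝ)
    with hVdef
  have hV1 : star V * V = 1 := mem_unitaryGroup_iff'.mp hH.eigenvectorUnitary.2
  have hV2 : V * star V = 1 := mem_unitaryGroup_iff.mp hH.eigenvectorUnitary.2
  set d : Fin p → ℝ := hH.eigenvalues with hddef
  have hdpos : ∀ i, 0 < d i := hQ.eigenvalues_pos
  have hspec : Q = V * diagonal d * star V := by
    have := hH.spectral_theorem
    simpa [RCLike.ofReal_real_eq_id, Function.id_comp] using this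
  set B : Matrix (Fin p) (Fin p) ℝ := star V * R * V with hBdef
  have key : ∀ X Y : Matrix (Fin p) (Fin p) ℝ,
      (star V * X * V) * (star V * Y * V) = star V * (X * Y) * V := by
    intro X Y
    calc (star V * X * V) * (star V * Y * V)
        = star V * (X * ((V * star V) * (Y * V))) := by simp only [Matrix.mul_assoc]
      _ = star V * (X * Y) * V := by rw [hV2]; simp only [Matrix.one_mul, Matrix.mul_assoc]
  have key2 : ∀ X Y : Matrix (Fin p) (Fin p) ℝ,
      (V * X * star V) * (V * Y * star V) = V * (X * Y) * star V := by
    intro X Y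
    calc (V * X * star V) * (V * Y * star V)
        = V * (X * ((star V * V) * (Y * star V))) := by simp only [Matrix.mul_assoc]
      _ = V * (X * Y) * star V := by rw [hV1]; simp only [Matrix.one_mul, Matrix.mul_assoc]
  have hD : star V * Q * V = diagonal d := by
    rw [hspec]
    calc star V * (V * diagonal d * star V) * V
        = (star V * V) * (diagonal d * (star V * V)) := by simp only [Matrix.mul_assoc]
      _ = diagonal d := by rw [hV1]; simp
  have hRB : V * B * star V = R := by
    rw [hBdef]
    calc V * (star V * R * V) * star V
        = (V * star V) * (R * (V * star V)) := by simp only [Matrix.mul_assoc]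
      _ = R := by rw [hV2]; simp
  have hBDD : B * (diagonal d * diagonal d) = (diagonal d * diagonal d) * B := by
    calc B * (diagonal d * diagonal d)
        = (star V * R * V) * ((star V * Q * V) * (star V * Q * V)) := by rw [hD, hBdef]
      _ = (star V * R * V) * (star V * (Q * Q) * V) := by rw [key Q Q]
      _ = star V * (R * (Q * Q)) * V := by rw [key R (Q * Q)]
      _ = star V * ((Q * Q) * R) * V := by rw [h]
      _ = (star V * (Q * Q) * V) * (star V * R * V) := by rw [key (Q * Q) R]
      _ = ((star V * Q * V) * (star V * Q * V)) * (star V * R * V) := by rw [key Q Q]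
      _ = (diagonal d * diagonal d) * B := by rw [hD, hBdef]
  have hBD : B * diagonal d = diagonal d * B := by
    ext i j
    have hij := congrFun (congrFun (congrArg (fun M : Matrix (Fin p) (Fin p) ℝ => (M : Matrix (Fin p) (Fin p) ℝ)) hBDD) i) j
    simp only [diagonal_mul_diagonal, mul_diagonal, diagonal_mul, Pi.mul_apply] at hij
    simp only [mul_diagonal, diagonal_mul]
    rcases eq_or_ne (B i j) 0 with hB0 | hB0
    · simp [hB0]
    · have hsq : d j * d j = d i * d i := by
        have h' : B i j * (d j * d j) = B i j * (d i * d i) := by rw [hij]; ring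
        exact mul_left_cancel₀ hB0 h'
      have hdd : d j = d i := by
        rcases mul_self_eq_mul_self_iff.mp hsq with h1 | h1
        · exact h1
        · exfalso; have := hdpos i; have := hdpos j; linarith
      rw [hdd, mul_comm]
  calc R * Q = (V * B * star V) * (V * diagonal d * star V) := by rw [hRB, ← hspec]
    _ = V * (B * diagonal d) * star V := by rw [key2]
    _ = V * (diagonal d * B) * star V := by rw [hBD]
    _ = (V * diagonal d * star V) * (V * B * star V) := by rw [key2]
    _ = Q * R := by rw [hRB, ← hspec]


lemma aux_smul_posDef {p : ℕ} {A : Matrix (Fin p) (Fin p) ℝ} (hA : A.PosDef)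
    {c : ℝ} (hc : 0 < c) : (c • A).PosDef := by
  refine PosDef.of_dotProduct_mulVec_pos ?_ (fun x hx => ?_)
  · show (c • A)ᴴ = c • A
    rw [conjTranspose_smul, hA.1, star_trivial]
  · rw [smul_mulVec, dotProduct_smul, smul_eq_mul]
    exact mul_pos hc (hA.dotProduct_mulVec_pos hx)

/-- ADMM Θ-step. Let `S, M` be symmetric `p × p` matrices, `μ > 0`,
`R = μM - S`, and let `Q` be the symmetric positive definite square root of `R² + 4μI`
(i.e. `Q` positive definite with `Q * Q = R * R + 4μ • I`). Then `Θ = (R + Q) / (2μ)` is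
symmetric positive definite and satisfies the stationarity condition
`Θ⁻¹ = S + μΘ - μM` of `Θ ↦ -log det Θ + tr(ΘS) + (μ/2)‖Θ - M‖_F²`. -/
theorem stmt15 {p : ℕ} (S M : Matrix (Fin p) (Fin p) ℝ)
    (hS : Sᵀ = S) (hM : Mᵀ = M) (μ : ℝ) (hμ : 0 < μ)
    (R : Matrix (Fin p) (Fin p) ℝ) (hR : R = μ • M - S)
    (Q : Matrix (Fin p) (Fin p) ℝ) (hQpd : Q.PosDef)
    (hQsq : Q * Q = R * R + (4 * μ) • (1 : Matrix (Fin p) (Fin p) ℝ))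
    (Θ : Matrix (Fin p) (Fin p) ℝ) (hΘ : Θ = (2 * μ)⁻¹ • (R + Q)) :
    Θᵀ = Θ ∧ Θ.PosDef ∧ Θ⁻¹ = S + μ • Θ - μ • M := by
  have hμ2 : (2 * μ) ≠ 0 := by positivity
  have hμ4 : (4 * μ) ≠ 0 := by positivity
  have hQT : Qᵀ = Q := (by simpa using hQpd.1 : Q.IsSymm)
  have hRT : Rᵀ = R := by rw [hR]; simp [transpose_sub, transpose_smul, hM, hS]
  have hcomm : R * Q = Q * R := by
    apply aux_commute hQpd
    rw [hQsq]
    simp only [Matrix.mul_add, Matrix.add_mul, Matrix.mul_smul, Matrix.smul_mul,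
      Matrix.mul_one, Matrix.one_mul, Matrix.mul_assoc]
  have hkey : (R + Q) * (Q - R) = (4 * μ) • (1 : Matrix (Fin p) (Fin p) ℝ) := by
    have e : (R + Q) * (Q - R) = Q * Q - R * R + (R * Q - Q * R) := by noncomm_ring
    rw [e, hcomm, hQsq]
    abel
  have hAinv : (R + Q) * ((4 * μ)⁻¹ • (Q - R)) = 1 := by
    rw [Matrix.mul_smul, hkey, smul_smul, inv_mul_cancel₀ hμ4, one_smul]
  have hAinv' : ((4 * μ)⁻¹ • (Q - R)) * (R + Q) = 1 := mul_eq_one_comm.mp hAinv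
  -- eigenvalues of R + Q are positive
  have hct : ∀ X : Matrix (Fin p) (Fin p) ℝ, Xᴴ = Xᵀ := fun X => by
    ext i j; simp [conjTranspose_apply]
  have hAH : (R + Q).IsHermitian := by
    show (R + Q)ᴴ = R + Q
    rw [hct, transpose_add, hRT, hQT]
  have heig : ∀ i, 0 < hAH.eigenvalues i := by
    intro i
    set v : Fin p → ℝ := ⇑(hAH.eigenvectorBasis i) with hv
    have hvne : v ≠ 0 := by
      have := hAH.eigenvectorBasis.orthonormal.ne_zero i
      intro h0
      apply this
      ext j
      exact congrFun h0 j
    have hAv : (R + Q) *ᵥ v = hAH.eigenvalues i • v := hAH.mulVec_eigenvectorBasis i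
    set lam := hAH.eigenvalues i with hlam
    have h1 : (Q - R) * (R + Q) = (4 * μ) • (1 : Matrix (Fin p) (Fin p) ℝ) := by
      have e : (Q - R) * (R + Q) = Q * Q - R * R + (Q * R - R * Q) := by noncomm_ring
      rw [e, ← hcomm, hQsq]
      abel
    have h2 : lam • ((Q - R) *ᵥ v) = (4 * μ) • v := by
      have : (Q - R) *ᵥ ((R + Q) *ᵥ v) = (4 * μ) • v := by
        rw [Matrix.mulVec_mulVec, h1, Matrix.smul_mulVec, Matrix.one_mulVec]
      rwa [hAv, Matrix.mulVec_smul] at this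
    have hlamne : lam ≠ 0 := by
      intro h0
      rw [h0, zero_smul] at h2
      exact hvne (by simpa [smul_eq_zero, hμ4] using h2.symm)
    have h3 : (Q - R) *ᵥ v = (lam⁻¹ * (4 * μ)) • v := by
      have := congrArg (fun w => lam⁻¹ • w) h2
      simpa [smul_smul, inv_mul_cancel₀ hlamne] using this
    have hQv : (2 : ℝ) • (Q *ᵥ v) = (lam + lam⁻¹ * (4 * μ)) • v := by
      have e : (R + Q) *ᵥ v + (Q - R) *ᵥ v = (2 : ℝ) • (Q *ᵥ v) := by
        rw [← Matrix.add_mulVec]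
        have e2 : (R + Q) + (Q - R) = (2 : ℝ) • Q := by module
        rw [e2, Matrix.smul_mulVec]
      rw [hAv, h3] at e
      rw [← e, add_smul]
    have hpos : 0 < dotProduct (star v) (Q *ᵥ v) := hQpd.dotProduct_mulVec_pos hvne
    have hvv : 0 < dotProduct (star v) v :=
      lt_of_le_of_ne (dotProduct_star_self_nonneg v)
        (fun h0 => hvne (dotProduct_star_self_eq_zero.mp h0.symm))
    have hdot : (2 : ℝ) * dotProduct (star v) (Q *ᵥ v)
        = (lam + lam⁻¹ * (4 * μ)) * dotProduct (star v) v := by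
      calc (2 : ℝ) * dotProduct (star v) (Q *ᵥ v)
          = dotProduct (star v) ((2 : ℝ) • (Q *ᵥ v)) := by
            rw [dotProduct_smul, smul_eq_mul]
        _ = dotProduct (star v) ((lam + lam⁻¹ * (4 * μ)) • v) := by rw [hQv]
        _ = (lam + lam⁻¹ * (4 * μ)) * dotProduct (star v) v := by
            rw [dotProduct_smul, smul_eq_mul]
    by_contra hle
    push_neg at hle
    have hlt : lam < 0 := lt_of_le_of_ne hle hlamne
    have hinv : lam⁻¹ < 0 := inv_lt_zero.mpr hlt
    have hsum : lam + lam⁻¹ * (4 * μ) < 0 := by nlinarith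
    nlinarith [mul_neg_of_neg_of_pos hsum hvv]
  have hApsd : (R + Q).PosSemidef := (Matrix.IsHermitian.posSemidef_iff_eigenvalues_nonneg hAH).mpr (fun i => (heig i).le)
  have hApd : (R + Q).PosDef := by
    refine PosDef.of_dotProduct_mulVec_pos hAH (fun x hx => ?_)
    rcases lt_or_eq_of_le (hApsd.dotProduct_mulVec_nonneg x) with h | h
    · exact h
    · exfalso
      have h0 : (R + Q) *ᵥ x = 0 := (hApsd.dotProduct_mulVec_zero_iff x).mp h.symm
      apply hx
      have : ((4 * μ)⁻¹ • (Q - R)) *ᵥ ((R + Q) *ᵥ x) = x := by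
        rw [Matrix.mulVec_mulVec, hAinv', Matrix.one_mulVec]
      rw [h0, Matrix.mulVec_zero] at this
      exact this.symm
  have hΘpd : Θ.PosDef := by
    rw [hΘ]
    exact aux_smul_posDef hApd (by positivity)
  have hΘT : Θᵀ = Θ := by
    rw [hΘ, transpose_smul, transpose_add, hRT, hQT]
  have hinvΘ : Θ⁻¹ = (2 : ℝ)⁻¹ • (Q - R) := by
    apply Matrix.inv_eq_right_inv
    rw [hΘ, Matrix.smul_mul, Matrix.mul_smul, hkey, smul_smul, smul_smul]
    rw [show (2 * μ)⁻¹ * 2⁻¹ * (4 * μ) = 1 from by field_simp; ring, one_smul]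
  refine ⟨hΘT, hΘpd, ?_⟩
  rw [hinvΘ, hΘ, hR, smul_smul]
  have hc : μ * (2 * μ)⁻¹ = 2⁻¹ := by field_simp
  rw [hc]
  module
end
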